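/- Let d, μ, μ′, L ∈ ℝ with 0 < μ′ < μ, d > 0, and L > d. In ℝ² set R = (0,0), R′ = (−√3 μ′/2, μ′/2), C″ = R′ + (0, d), C = C″ + (√3 μ/2, −μ/2), N′ = R′ + (L, 0), N = N′ + (√3 μ/2, −μ/2), and let s = 2L/(μ − μ′) + √3. Then: (i) ⟪(1, s), N⟫ = 0, i.e., the line {(x, y) : y = s x} through R is perpendicular to the line RN; and (ii) the second coordinate of R′ minus s times its first coordinate is strictly positive, while the second coordinate of C minus s times its first coordinate is strictly negative — that is, C and R′ lie on strictly opposite open sides of the line y = s x. -/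

import Mathlib

open scoped RealInnerProductSpace

/-- The point of `ℝ² = EuclideanSpace ℝ (Fin 2)` with coordinates `(x, y)`. -/
def pt (x y : ℝ) : EuclideanSpace ℝ (Fin 2) := WithLp.toLp 2 ![x, y]

/-- Concluding coordinate computation of phase 5 (case `D₃`): with the current
Reference position `R` at the origin, `R′ = (−√3μ′/2, μ′/2)`,
`C″ = R′ + (0, d)`, `C = C″ + (√3μ/2, −μ/2)`, `N′ = R′ + (L, 0)`,
`N = N′ + (√3μ/2, −μ/2)` and `s = 2L/(μ−μ′) + √3`:
(i) the line `y = s x` through `R` is perpendicular to the line `RN`, i.e.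
`⟪(1, s), N⟫ = 0`; and (ii) `C` and `R′` lie on strictly opposite open sides of
the line `y = s x`. -/
theorem turingmobile_phase5_opposite_sides
    (d μ μ' L : ℝ) (hμ' : 0 < μ') (hμ : μ' < μ) (hd : 0 < d) (hL : d < L)
    (R R' C'' C N' N : EuclideanSpace ℝ (Fin 2)) (s : ℝ)
    (hR : R = pt 0 0)
    (hR' : R' = pt (-(Real.sqrt 3 * μ') / 2) (μ' / 2))
    (hC'' : C'' = R' + pt 0 d)
    (hC : C = C'' + pt (Real.sqrt 3 * μ / 2) (-(μ / 2)))
    (hN' : N' = R' + pt L 0)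
    (hN : N = N' + pt (Real.sqrt 3 * μ / 2) (-(μ / 2)))
    (hs : s = 2 * L / (μ - μ') + Real.sqrt 3) :
    ⟪pt 1 s, N⟫ = 0 ∧
    0 < R' 1 - s * R' 0 ∧
    C 1 - s * C 0 < 0 := by
  have h3 : (1:ℝ) ≤ Real.sqrt 3 := by
    rw [show (1:ℝ) = Real.sqrt 1 by simp]
    exact Real.sqrt_le_sqrt (by norm_num)
  have hmm : (0:ℝ) < μ - μ' := by linarith
  have hL0 : (0:ℝ) < L := lt_trans hd hL
  subst hR hR' hC'' hC hN' hN hs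
  refine ⟨?_, ?_, ?_⟩
  · simp only [pt, PiLp.inner_apply, RCLike.inner_apply, conj_trivial,
      Fin.sum_univ_two, PiLp.add_apply, PiLp.toLp_apply, Matrix.cons_val_zero, Matrix.cons_val_one,
      Matrix.head_cons]
    field_simp
    ring
  · simp only [pt, PiLp.toLp_apply, Matrix.cons_val_zero, Matrix.cons_val_one, Matrix.head_cons]
    have h1 : 0 ≤ (2 * L / (μ - μ') + Real.sqrt 3) * (Real.sqrt 3 * μ' / 2) := by
      positivity
    nlinarith [h1]
  · simp only [pt, PiLp.add_apply, PiLp.toLp_apply, Matrix.cons_val_zero, Matrix.cons_val_one,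
      Matrix.head_cons]
    have key : (μ' / 2 + d + -(μ / 2)) -
        (2 * L / (μ - μ') + Real.sqrt 3) * (-(Real.sqrt 3 * μ') / 2 + 0 + Real.sqrt 3 * μ / 2)
        = d - 2 * (μ - μ') - Real.sqrt 3 * L := by
      have h33 : Real.sqrt 3 * Real.sqrt 3 = 3 := Real.mul_self_sqrt (by norm_num)
      field_simp
      linear_combination (-(μ - μ') ^ 2) * h33
    rw [key]
    nlinarith [h3, hmm]
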